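/- Fix integers V ≥ 2, d_x ≥ 1 and d_c ≥ 0, set d = d_x + d_c, identify the alphabet with Fin V with a distinguished mask symbol M, and for t > 0 let K_t be the masking channel on Fin V given by K_t(·|M) = δ_M and, for x ≠ M, K_t(y|x) = e^{−t} δ_{y=x} + (1 − e^{−t}) δ_{y=M}. Fix condition symbols c_1, …, c_{d_c} ∈ Fin V, and let q_0 be a probability mass function on (Fin V)^d supported on sequences whose last d_c coordinates equal (c_1, …, c_{d_c}). Let q_t be obtained from q_0 by applying K_t independently to each of the first d_x coordinates and the identity channel to the last d_c coordinates, i.e. q_t(y) = Σ_x q_0(x) ∏_{i=1}^{d_x} K_t(y_i | x_i) · ∏_{j=1}^{d_c} δ_{y_{d_x+j} = x_{d_x+j}}. Let p_init be the product distribution whose first d_x coordinates are each ν_{e^{−t}}, where ν_ε(M) = 1 − ε and ν_ε(j) = ε/(V−1) for j ≠ M, and whose last d_c coordinates are the point masses δ_{c_1}, …, δ_{c_{d_c}}. Then for every t ≥ log 2, KL(q_t ‖ p_init) ≤ d_x · e^{−t} · (log(V − 1) + 2). -/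

import Mathlib

open Finset

/-- The masking channel of a masked diffusion model at time `t`: a mask token stays
masked; a non-mask token `x` survives with probability `e⁻ᵗ` and is replaced by the
mask symbol `M` with probability `1 - e⁻ᵗ`. -/
noncomputable def maskKernel (V : ℕ) (M : Fin V) (t : ℝ) (x y : Fin V) : ℝ :=
  if x = M then (if y = M then 1 else 0)
  else if y = x then Real.exp (-t) else if y = M then 1 - Real.exp (-t) else 0

/-- The non-stationary per-token initialization distribution of Assumption A.1:
mass `1 - ε` on the mask symbol and mass `ε` spread uniformly over the other
`V - 1` symbols. -/
noncomputable def nuEps (V : ℕ) (M : Fin V) (ε : ℝ) (y : Fin V) : ℝ :=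
  if y = M then 1 - ε else ε / ((V : ℝ) - 1)

lemma logsum_aux {ι : Type*} [Fintype ι] (a b : ι → ℝ) (ha : ∀ i, 0 ≤ a i)
    (hb : ∀ i, 0 ≤ b i) (hab : ∀ i, b i = 0 → a i = 0) :
    (∑ i, a i) * Real.log ((∑ i, a i) / (∑ i, b i)) ≤ ∑ i, a i * Real.log (a i / b i) := by
  by_cases hB : (∑ i, b i) = 0
  · have hb0 : ∀ i, b i = 0 := fun i =>
      (Finset.sum_eq_zero_iff_of_nonneg (fun i _ => hb i)).1 hB i (mem_univ i)
    have ha0 : ∀ i, a i = 0 := fun i => hab i (hb0 i)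
    simp [ha0]
  have hBpos : 0 < ∑ i, b i :=
    lt_of_le_of_ne (Finset.sum_nonneg fun i _ => hb i) (Ne.symm hB)
  by_cases hA : (∑ i, a i) = 0
  · have ha0 : ∀ i, a i = 0 := fun i =>
      (Finset.sum_eq_zero_iff_of_nonneg (fun i _ => ha i)).1 hA i (mem_univ i)
    simp [ha0]
  have hApos : 0 < ∑ i, a i :=
    lt_of_le_of_ne (Finset.sum_nonneg fun i _ => ha i) (Ne.symm hA)
  set A := ∑ i, a i with hAdef
  set B := ∑ i, b i with hBdef
  have key : ∀ i, a i * Real.log (A / B) + a i - b i * (A / B) ≤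
      a i * Real.log (a i / b i) := by
    intro i
    rcases eq_or_lt_of_le (ha i) with h0 | hpos
    · rw [← h0]
      have : 0 ≤ b i * (A / B) := mul_nonneg (hb i) (div_nonneg hApos.le hBpos.le)
      simp only [zero_mul, zero_add, zero_sub]
      linarith
    · have hbpos : 0 < b i := by
        rcases eq_or_lt_of_le (hb i) with h0' | h
        · exfalso; have h' := hab i h0'.symm; rw [h'] at hpos; exact lt_irrefl 0 hpos
        · exact h
      have hz : 0 < (b i * A) / (a i * B) := by positivity
      have hlog := Real.log_le_sub_one_of_pos hz
      have e1 : Real.log ((b i * A) / (a i * B)) =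
          Real.log (A / B) - Real.log (a i / b i) := by
        rw [Real.log_div (mul_pos hbpos hApos).ne' (mul_pos hpos hBpos).ne',
          Real.log_mul hbpos.ne' hApos.ne', Real.log_mul hpos.ne' hBpos.ne',
          Real.log_div hApos.ne' hBpos.ne', Real.log_div hpos.ne' hbpos.ne']
        ring
      rw [e1] at hlog
      have h2 := mul_le_mul_of_nonneg_left hlog hpos.le
      have e3 : a i * ((b i * A) / (a i * B) - 1) = b i * (A / B) - a i := by
        field_simp
      rw [e3] at h2
      nlinarith
  have sumkey := Finset.sum_le_sum (fun i (_ : i ∈ univ) => key i)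
  have hsum : ∑ i, (a i * Real.log (A / B) + a i - b i * (A / B)) =
      A * Real.log (A / B) := by
    rw [Finset.sum_sub_distrib, Finset.sum_add_distrib, ← Finset.sum_mul, ← Finset.sum_mul,
      ← hAdef, ← hBdef]
    have : B * (A / B) = A := by field_simp
    rw [this]; ring
  linarith [hsum ▸ sumkey]

lemma tensor_kl {n V : ℕ} (f g : Fin n → Fin V → ℝ) (hf0 : ∀ i v, 0 ≤ f i v)
    (hf1 : ∀ i, ∑ v, f i v = 1) (hg : ∀ i v, 0 < g i v) :
    ∑ y : Fin n → Fin V,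
        (∏ i, f i (y i)) * Real.log ((∏ i, f i (y i)) / ∏ i, g i (y i)) =
      ∑ i, ∑ v, f i v * Real.log (f i v / g i v) := by
  have step1 : ∀ y : Fin n → Fin V,
      (∏ i, f i (y i)) * Real.log ((∏ i, f i (y i)) / ∏ i, g i (y i)) =
        ∑ i, (∏ j, f j (y j)) * Real.log (f i (y i) / g i (y i)) := by
    intro y
    by_cases h : ∃ i, f i (y i) = 0
    · obtain ⟨i0, hi0⟩ := h
      have hp : (∏ j, f j (y j)) = 0 := Finset.prod_eq_zero (mem_univ i0) hi0
      rw [hp]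
      simp
    · push_neg at h
      have hd : (∏ i, f i (y i)) / ∏ i, g i (y i) = ∏ i, (f i (y i) / g i (y i)) :=
        (Finset.prod_div_distrib _ _).symm
      rw [hd, Real.log_prod (f := fun i => f i (y i) / g i (y i)) (fun i _ => div_ne_zero (h i) (hg i (y i)).ne'),
        Finset.mul_sum]
  rw [Finset.sum_congr rfl (fun y _ => step1 y), Finset.sum_comm]
  refine Finset.sum_congr rfl (fun i _ => ?_)
  set F : Fin n → Fin V → ℝ :=
    fun j v => if j = i then f j v * Real.log (f j v / g j v) else f j v with hF
  have hFi : ∀ v, F i v = f i v * Real.log (f i v / g i v) := fun v => by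
    rw [hF]; simp
  have hFj : ∀ j, j ≠ i → ∀ v, F j v = f j v := fun j hj v => by
    rw [hF]; simp [hj]
  have hterm : ∀ y : Fin n → Fin V,
      (∏ j, f j (y j)) * Real.log (f i (y i) / g i (y i)) = ∏ j, F j (y j) := by
    intro y
    rw [← Finset.prod_erase_mul univ (fun j => F j (y j)) (mem_univ i),
      ← Finset.prod_erase_mul univ (fun j => f j (y j)) (mem_univ i),
      Finset.prod_congr rfl (fun j hj => hFj j (Finset.ne_of_mem_erase hj) (y j)), hFi]
    ring
  rw [Finset.sum_congr rfl (fun y _ => hterm y), ← Fintype.prod_sum F,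
    Finset.prod_eq_single i (fun j _ hj => by rw [Finset.sum_congr rfl (fun v _ => hFj j hj v)]; exact hf1 j)
      (fun h => absurd (mem_univ i) h)]
  exact Finset.sum_congr rfl (fun v _ => hFi v)

def pairEquiv (dx dc V : ℕ) : ((Fin dx → Fin V) × (Fin dc → Fin V)) ≃ (Fin (dx + dc) → Fin V) :=
  (Equiv.sumArrowEquivProdArrow _ _ _).symm.trans (finSumFinEquiv.arrowCongr (Equiv.refl _))

lemma pairEquiv_castAdd {dx dc V : ℕ} (a : Fin dx → Fin V) (b : Fin dc → Fin V) (i : Fin dx) :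
    pairEquiv dx dc V (a, b) (Fin.castAdd dc i) = a i := by
  simp [pairEquiv, Equiv.sumArrowEquivProdArrow, Equiv.arrowCongr,
    finSumFinEquiv_symm_apply_castAdd]

lemma pairEquiv_natAdd {dx dc V : ℕ} (a : Fin dx → Fin V) (b : Fin dc → Fin V) (j : Fin dc) :
    pairEquiv dx dc V (a, b) (Fin.natAdd dx j) = b j := by
  simp [pairEquiv, Equiv.sumArrowEquivProdArrow, Equiv.arrowCongr,
    finSumFinEquiv_symm_apply_natAdd]

lemma mixture_kl_le {X Y : Type*} [Fintype X] [Fintype Y] (q0 : X → ℝ)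
    (P : X → Y → ℝ) (p : Y → ℝ)
    (hq00 : ∀ x, 0 ≤ q0 x) (hq01 : ∑ x, q0 x = 1)
    (hP : ∀ x y, 0 ≤ P x y) (hp : ∀ y, 0 ≤ p y)
    (hab : ∀ x y, q0 x ≠ 0 → p y = 0 → P x y = 0)
    (B : ℝ) (hB : ∀ x, q0 x ≠ 0 → ∑ y, P x y * Real.log (P x y / p y) ≤ B) :
    ∑ y, (∑ x, q0 x * P x y) * Real.log ((∑ x, q0 x * P x y) / p y) ≤ B := by
  have stepA : ∀ y, (∑ x, q0 x * P x y) * Real.log ((∑ x, q0 x * P x y) / p y) ≤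
      ∑ x, q0 x * (P x y * Real.log (P x y / p y)) := by
    intro y
    have hb : ∑ x, q0 x * p y = p y := by rw [← Finset.sum_mul, hq01, one_mul]
    have h := logsum_aux (fun x => q0 x * P x y) (fun x => q0 x * p y)
      (fun x => mul_nonneg (hq00 x) (hP x y)) (fun x => mul_nonneg (hq00 x) (hp y))
      (fun x hx0 => by
        rcases mul_eq_zero.1 hx0 with h | h
        · rw [h, zero_mul]
        · by_cases hq : q0 x = 0
          · rw [hq, zero_mul]
          · rw [hab x y hq h, mul_zero])
    rw [hb] at h
    refine le_trans h (le_of_eq (Finset.sum_congr rfl fun x _ => ?_))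
    by_cases hq : q0 x = 0
    · simp [hq]
    · rw [mul_div_mul_left _ _ hq]
      ring
  calc ∑ y, (∑ x, q0 x * P x y) * Real.log ((∑ x, q0 x * P x y) / p y)
      ≤ ∑ y, ∑ x, q0 x * (P x y * Real.log (P x y / p y)) :=
        Finset.sum_le_sum (fun y _ => stepA y)
    _ = ∑ x, q0 x * ∑ y, P x y * Real.log (P x y / p y) := by
        rw [Finset.sum_comm]
        exact Finset.sum_congr rfl fun x _ => (Finset.mul_sum _ _ _).symm
    _ ≤ ∑ x, q0 x * B := by
        refine Finset.sum_le_sum fun x _ => ?_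
        by_cases hq : q0 x = 0
        · rw [hq, zero_mul, zero_mul]
        · exact mul_le_mul_of_nonneg_left (hB x hq) (hq00 x)
    _ = B := by rw [← Finset.sum_mul, hq01, one_mul]

lemma maskKernel_nonneg {V : ℕ} (M : Fin V) {t : ℝ} (ht : 0 ≤ t) (x y : Fin V) :
    0 ≤ maskKernel V M t x y := by
  have h1 : Real.exp (-t) ≤ 1 := Real.exp_le_one_iff.2 (by linarith)
  have h0 : 0 < Real.exp (-t) := Real.exp_pos _
  unfold maskKernel
  split_ifs <;> linarith

lemma maskKernel_sum {V : ℕ} (M : Fin V) (t : ℝ) (x : Fin V) :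
    ∑ y, maskKernel V M t x y = 1 := by
  unfold maskKernel
  by_cases hx : x = M
  · simp [hx]
  · have key : ∀ y : Fin V,
        (if x = M then (if y = M then (1:ℝ) else 0)
          else if y = x then Real.exp (-t) else if y = M then 1 - Real.exp (-t) else 0) =
        (if y = x then Real.exp (-t) else 0) + (if y = M then 1 - Real.exp (-t) else 0) := by
      intro y
      rw [if_neg hx]
      by_cases h1 : y = x
      · subst h1
        rw [if_pos rfl, if_pos rfl, if_neg hx, add_zero]
      · rw [if_neg h1, if_neg h1, zero_add]
    rw [Finset.sum_congr rfl (fun y _ => key y), Finset.sum_add_distrib]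
    simp

lemma nuEps_pos {V : ℕ} (hV : 2 ≤ V) (M : Fin V) {ε : ℝ} (h0 : 0 < ε) (h1 : ε < 1)
    (y : Fin V) : 0 < nuEps V M ε y := by
  have hV1 : (1 : ℝ) ≤ (V : ℝ) - 1 := by
    have : (2 : ℝ) ≤ (V : ℝ) := by exact_mod_cast hV
    linarith
  unfold nuEps
  split_ifs
  · linarith
  · positivity

lemma single_kl_bound {V : ℕ} (hV : 2 ≤ V) (M : Fin V) {t : ℝ} (ht : Real.log 2 ≤ t)
    (x : Fin V) :
    ∑ v, maskKernel V M t x v *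
        Real.log (maskKernel V M t x v / nuEps V M (Real.exp (-t)) v) ≤
      Real.exp (-t) * (Real.log ((V : ℝ) - 1) + 2) := by
  set ε := Real.exp (-t) with hε
  have hε0 : 0 < ε := Real.exp_pos _
  have hε2 : ε ≤ 1 / 2 := by
    rw [hε]
    calc Real.exp (-t) ≤ Real.exp (-Real.log 2) := Real.exp_le_exp.2 (by linarith)
      _ = 1 / 2 := by rw [Real.exp_neg, Real.exp_log (by norm_num : (0:ℝ) < 2)]; norm_num
  have hV1 : (1 : ℝ) ≤ (V : ℝ) - 1 := by
    have : (2 : ℝ) ≤ (V : ℝ) := by exact_mod_cast hV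
    linarith
  have hlogV : 0 ≤ Real.log ((V : ℝ) - 1) := Real.log_nonneg hV1
  have hpos : (0 : ℝ) < 1 - ε := by linarith
  by_cases hx : x = M
  · have key : ∀ v : Fin V,
        maskKernel V M t x v * Real.log (maskKernel V M t x v / nuEps V M ε v) =
          if v = M then Real.log (1 / (1 - ε)) else 0 := by
      intro v
      unfold maskKernel nuEps
      rw [if_pos hx]
      by_cases hv : v = M
      · rw [if_pos hv, if_pos hv, if_pos hv, one_mul]
      · simp [hv]
    rw [Finset.sum_congr rfl (fun v _ => key v), Finset.sum_ite_eq' univ M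
      (fun _ => Real.log (1 / (1 - ε))), if_pos (mem_univ M)]
    have hb : Real.log (1 / (1 - ε)) ≤ 1 / (1 - ε) - 1 :=
      Real.log_le_sub_one_of_pos (by positivity)
    have hb2 : 1 / (1 - ε) ≤ 1 + 2 * ε := by
      rw [div_le_iff₀ hpos]
      nlinarith
    nlinarith
  · have key : ∀ v : Fin V,
        maskKernel V M t x v * Real.log (maskKernel V M t x v / nuEps V M ε v) =
          if v = x then ε * Real.log ((V : ℝ) - 1) else 0 := by
      intro v
      unfold maskKernel nuEps
      rw [if_neg hx]
      by_cases hv : v = x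
      · subst hv
        rw [if_pos rfl, if_pos rfl, if_neg hx]
        have : ε / (ε / ((V : ℝ) - 1)) = (V : ℝ) - 1 := by
          rw [div_div_eq_mul_div, mul_comm ε ((V:ℝ)-1), mul_div_assoc,
            div_self hε0.ne', mul_one]
        rw [this]
      · rw [if_neg hv, if_neg hv]
        by_cases hm : v = M
        · subst hm
          rw [if_pos rfl, if_pos rfl, div_self hpos.ne', Real.log_one, mul_zero]
        · rw [if_neg hm, if_neg hm, zero_mul]
    rw [Finset.sum_congr rfl (fun v _ => key v), Finset.sum_ite_eq' univ x
      (fun _ => ε * Real.log ((V : ℝ) - 1)), if_pos (mem_univ x)]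
    nlinarith
set_option maxHeartbeats 1000000 in
/-- Conditioned form of Lemma A.2: the forward masking process corrupts only the
first `d_x` (answer) coordinates while the last `d_c` (condition) coordinates,
fixed to the known condition symbols `c`, are left untouched; then
`KL(q_t ‖ p_init) ≤ d_x · e⁻ᵗ · (log (V - 1) + 2)` once `t ≥ log 2`. -/
theorem kl_conditioned_corrupted_le_explicit
    {V dx dc : ℕ} (hV : 2 ≤ V) (hdx : 1 ≤ dx) (M : Fin V) (t : ℝ)
    (ht : Real.log 2 ≤ t)
    (c : Fin dc → Fin V)
    (q0 : (Fin (dx + dc) → Fin V) → ℝ)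
    (hq00 : ∀ x, 0 ≤ q0 x) (hq01 : ∑ x, q0 x = 1)
    (hsupp : ∀ x, q0 x ≠ 0 → ∀ j : Fin dc, x (Fin.natAdd dx j) = c j) :
    ∑ y : Fin (dx + dc) → Fin V,
        (∑ x, q0 x *
            ((∏ i : Fin dx, maskKernel V M t (x (Fin.castAdd dc i)) (y (Fin.castAdd dc i))) *
              ∏ j : Fin dc, (if y (Fin.natAdd dx j) = x (Fin.natAdd dx j) then (1 : ℝ) else 0))) *
          Real.log
            ((∑ x, q0 x *
                ((∏ i : Fin dx, maskKernel V M t (x (Fin.castAdd dc i)) (y (Fin.castAdd dc i))) *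
                  ∏ j : Fin dc, (if y (Fin.natAdd dx j) = x (Fin.natAdd dx j) then (1 : ℝ) else 0))) /
              ((∏ i : Fin dx, nuEps V M (Real.exp (-t)) (y (Fin.castAdd dc i))) *
                ∏ j : Fin dc, (if y (Fin.natAdd dx j) = c j then (1 : ℝ) else 0))) ≤
      (dx : ℝ) * Real.exp (-t) * (Real.log ((V : ℝ) - 1) + 2) := by
  have hε0 : (0:ℝ) < Real.exp (-t) := Real.exp_pos _
  have ht0 : (0:ℝ) ≤ t := le_trans (Real.log_nonneg one_le_two) ht
  have hε1 : Real.exp (-t) < 1 := by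
    have htpos : 0 < t := lt_of_lt_of_le (Real.log_pos one_lt_two) ht
    rw [← Real.exp_zero]
    exact Real.exp_lt_exp.2 (by linarith)
  have hnu : ∀ v, 0 < nuEps V M (Real.exp (-t)) v := nuEps_pos hV M hε0 hε1
  have hK0 : ∀ a b, 0 ≤ maskKernel V M t a b := maskKernel_nonneg M ht0
  have main := mixture_kl_le q0
    (fun (x y : Fin (dx + dc) → Fin V) =>
      (∏ i, maskKernel V M t (x (Fin.castAdd dc i)) (y (Fin.castAdd dc i))) *
      ∏ j, (if y (Fin.natAdd dx j) = x (Fin.natAdd dx j) then (1:ℝ) else 0))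
    (fun (y : Fin (dx + dc) → Fin V) =>
      (∏ i, nuEps V M (Real.exp (-t)) (y (Fin.castAdd dc i))) *
      ∏ j, (if y (Fin.natAdd dx j) = c j then (1:ℝ) else 0))
    hq00 hq01 ?hP ?hp ?hab ((dx : ℝ) * Real.exp (-t) * (Real.log ((V : ℝ) - 1) + 2)) ?hB
  · exact main
  case hP =>
    intro x y
    refine mul_nonneg (Finset.prod_nonneg fun i _ => hK0 _ _)
      (Finset.prod_nonneg fun j _ => ?_)
    split <;> norm_num
  case hp =>
    intro y
    refine mul_nonneg (Finset.prod_nonneg fun i _ => (hnu _).le)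
      (Finset.prod_nonneg fun j _ => ?_)
    split <;> norm_num
  case hab =>
    intro x y hq hp0
    beta_reduce at hp0 ⊢
    have hnuprod : 0 < ∏ i, nuEps V M (Real.exp (-t)) (y (Fin.castAdd dc i)) :=
      Finset.prod_pos fun i _ => hnu _
    have hδ : (∏ j, (if y (Fin.natAdd dx j) = c j then (1:ℝ) else 0)) = 0 := by
      rcases mul_eq_zero.1 hp0 with h | h
      · exact absurd h hnuprod.ne'
      · exact h
    obtain ⟨j, -, hj⟩ := Finset.prod_eq_zero_iff.1 hδ
    have hyj : y (Fin.natAdd dx j) ≠ c j := by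
      intro hcontra
      rw [if_pos hcontra] at hj
      norm_num at hj
    have hfac : (if y (Fin.natAdd dx j) = x (Fin.natAdd dx j) then (1:ℝ) else 0) = 0 := by
      rw [if_neg]
      rw [hsupp x hq j]
      exact hyj
    rw [Finset.prod_eq_zero (mem_univ j) hfac, mul_zero]
  case hB =>
    intro x hq
    beta_reduce
    have hre : ∑ ab : (Fin dx → Fin V) × (Fin dc → Fin V),
        (((∏ i, maskKernel V M t (x (Fin.castAdd dc i)) (ab.1 i)) *
            ∏ j, (if ab.2 j = c j then (1:ℝ) else 0)) *
          Real.log (((∏ i, maskKernel V M t (x (Fin.castAdd dc i)) (ab.1 i)) *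
              ∏ j, (if ab.2 j = c j then (1:ℝ) else 0)) /
            ((∏ i, nuEps V M (Real.exp (-t)) (ab.1 i)) *
              ∏ j, (if ab.2 j = c j then (1:ℝ) else 0)))) =
        ∑ y : Fin (dx + dc) → Fin V,
        (((∏ i, maskKernel V M t (x (Fin.castAdd dc i)) (y (Fin.castAdd dc i))) *
            ∏ j, (if y (Fin.natAdd dx j) = x (Fin.natAdd dx j) then (1:ℝ) else 0)) *
          Real.log (((∏ i, maskKernel V M t (x (Fin.castAdd dc i)) (y (Fin.castAdd dc i))) *
              ∏ j, (if y (Fin.natAdd dx j) = x (Fin.natAdd dx j) then (1:ℝ) else 0)) /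
            ((∏ i, nuEps V M (Real.exp (-t)) (y (Fin.castAdd dc i))) *
              ∏ j, (if y (Fin.natAdd dx j) = c j then (1:ℝ) else 0)))) := by
      refine Fintype.sum_equiv (pairEquiv dx dc V) _ _ ?_
      rintro ⟨a, b⟩
      simp only [pairEquiv_castAdd, pairEquiv_natAdd, hsupp x hq]
    rw [← hre, Fintype.sum_prod_type]
    have hinner : ∀ a : Fin dx → Fin V,
        (∑ b : Fin dc → Fin V,
          (((∏ i, maskKernel V M t (x (Fin.castAdd dc i)) (a i)) *
              ∏ j, (if b j = c j then (1:ℝ) else 0)) *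
            Real.log (((∏ i, maskKernel V M t (x (Fin.castAdd dc i)) (a i)) *
                ∏ j, (if b j = c j then (1:ℝ) else 0)) /
              ((∏ i, nuEps V M (Real.exp (-t)) (a i)) *
                ∏ j, (if b j = c j then (1:ℝ) else 0))))) =
          (∏ i, maskKernel V M t (x (Fin.castAdd dc i)) (a i)) *
            Real.log ((∏ i, maskKernel V M t (x (Fin.castAdd dc i)) (a i)) /
              (∏ i, nuEps V M (Real.exp (-t)) (a i))) := by
      intro a
      rw [Finset.sum_eq_single c]
      · have h1 : (∏ j, (if c j = c j then (1:ℝ) else 0)) = 1 :=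
          Finset.prod_eq_one fun j _ => if_pos rfl
        rw [h1, mul_one, mul_one]
      · intro b _ hb
        obtain ⟨j, hj⟩ := Function.ne_iff.1 hb
        have h0 : (∏ j, (if b j = c j then (1:ℝ) else 0)) = 0 :=
          Finset.prod_eq_zero (mem_univ j) (if_neg hj)
        rw [h0, mul_zero, zero_mul]
      · intro h
        exact absurd (mem_univ c) h
    rw [Finset.sum_congr rfl fun a _ => hinner a]
    rw [tensor_kl (fun i v => maskKernel V M t (x (Fin.castAdd dc i)) v)
      (fun i v => nuEps V M (Real.exp (-t)) v) (fun i v => hK0 _ _)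
      (fun i => maskKernel_sum M t _) (fun i v => hnu v)]
    calc ∑ i : Fin dx, ∑ v, maskKernel V M t (x (Fin.castAdd dc i)) v *
          Real.log (maskKernel V M t (x (Fin.castAdd dc i)) v / nuEps V M (Real.exp (-t)) v)
        ≤ ∑ _i : Fin dx, Real.exp (-t) * (Real.log ((V:ℝ) - 1) + 2) :=
          Finset.sum_le_sum fun i _ => single_kl_bound hV M ht _
      _ = (dx:ℝ) * Real.exp (-t) * (Real.log ((V:ℝ) - 1) + 2) := by
          rw [Finset.sum_const, Finset.card_univ, Fintype.card_fin, nsmul_eq_mul]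
          ring
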